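/- arXiv:1812.07600 — 7 statements merged into one kernel-verified Lean document; each statement's English description precedes it below -/
import Mathlib

section
/- In a cubical set with connections, for any singular n-cube τ and β ∈ {+,−}: ∂_{n+1} Γ_1^β(τ) = − Γ_1^β ∘ Σ_{i=2}^n (-1)^i (f_i^- − f_i^+)(τ), where ∂ is the cubical boundary operator. -/
structure PrecubicalConn where
  K : ℕ → Type*
  face : Bool → ∀ n : ℕ, ℕ → K (n + 1) → K n
  degen : ∀ n : ℕ, ℕ → K n → K (n + 1)
  conn : Bool → ∀ n : ℕ, ℕ → K n → K (n + 1)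

/-- The axioms of a cubical set with connections (`true` stands for `+`, `false` for `-`;
indices are 1-based with explicit range guards). -/
structure CubicalConnAxioms (P : PrecubicalConn) : Prop where
  face_face : ∀ (α β : Bool) (n i j : ℕ) (σ : P.K (n + 2)), 1 ≤ i → i < j → j ≤ n + 2 →
    P.face α n i (P.face β (n + 1) j σ) = P.face β n (j - 1) (P.face α (n + 1) i σ)
  degen_degen : ∀ (n i j : ℕ) (σ : P.K n), 1 ≤ i → i ≤ j → j ≤ n + 1 →
    P.degen (n + 1) i (P.degen n j σ) = P.degen (n + 1) (j + 1) (P.degen n i σ)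
  face_degen_lt : ∀ (α : Bool) (n i j : ℕ) (σ : P.K (n + 1)), 1 ≤ i → i < j → j ≤ n + 2 →
    P.face α (n + 1) i (P.degen (n + 1) j σ) = P.degen n (j - 1) (P.face α n i σ)
  face_degen_gt : ∀ (α : Bool) (n i j : ℕ) (σ : P.K (n + 1)), 1 ≤ j → j < i → i ≤ n + 2 →
    P.face α (n + 1) i (P.degen (n + 1) j σ) = P.degen n j (P.face α n (i - 1) σ)
  face_degen_eq : ∀ (α : Bool) (n i : ℕ) (σ : P.K n), 1 ≤ i → i ≤ n + 1 →
    P.face α n i (P.degen n i σ) = σ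
  conn_conn : ∀ (α β : Bool) (n i j : ℕ) (σ : P.K n), 1 ≤ i → i ≤ j → j ≤ n →
    P.conn α (n + 1) i (P.conn β n j σ) = P.conn β (n + 1) (j + 1) (P.conn α n i σ)
  conn_degen_lt : ∀ (α : Bool) (n i j : ℕ) (σ : P.K n), 1 ≤ i → i < j → j ≤ n + 1 →
    P.conn α (n + 1) i (P.degen n j σ) = P.degen (n + 1) (j + 1) (P.conn α n i σ)
  conn_degen_gt : ∀ (α : Bool) (n i j : ℕ) (σ : P.K n), 1 ≤ j → j < i → i ≤ n + 1 →
    P.conn α (n + 1) i (P.degen n j σ) = P.degen (n + 1) j (P.conn α n (i - 1) σ)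
  conn_degen_eq : ∀ (α : Bool) (n i : ℕ) (σ : P.K n), 1 ≤ i → i ≤ n + 1 →
    P.conn α (n + 1) i (P.degen n i σ) = P.degen (n + 1) (i + 1) (P.degen n i σ)
  face_conn_lt : ∀ (α β : Bool) (n i j : ℕ) (σ : P.K (n + 1)), 1 ≤ i → i < j → j ≤ n + 1 →
    P.face α (n + 1) i (P.conn β (n + 1) j σ) = P.conn β n (j - 1) (P.face α n i σ)
  face_conn_gt : ∀ (α β : Bool) (n i j : ℕ) (σ : P.K (n + 1)), 1 ≤ j → j + 1 < i → i ≤ n + 2 →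
    P.face α (n + 1) i (P.conn β (n + 1) j σ) = P.conn β n j (P.face α n (i - 1) σ)
  face_conn_self : ∀ (β : Bool) (n i j : ℕ) (σ : P.K n), 1 ≤ j → j ≤ n → (i = j ∨ i = j + 1) →
    P.face β n i (P.conn β n j σ) = σ
  face_conn_opp : ∀ (α β : Bool) (n i j : ℕ) (σ : P.K (n + 1)), 1 ≤ j → j ≤ n + 1 →
    (i = j ∨ i = j + 1) → α ≠ β →
    P.face α (n + 1) i (P.conn β (n + 1) j σ) = P.degen n j (P.face α n j σ)

/-- A cube is degenerate if it is of the form `ε_i f_i^+ σ`. -/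
def PrecubicalConn.Degenerate (P : PrecubicalConn) : ∀ {n : ℕ}, P.K n → Prop :=
  fun {n} σ =>
    match n, σ with
    | 0, _ => False
    | m + 1, σ => ∃ i : ℕ, 1 ≤ i ∧ i ≤ m + 1 ∧ σ = P.degen m i (P.face true m i σ)

/-- A cube is a connection if it lies in the image of some `Γ_i^β`. -/
def PrecubicalConn.IsConn (P : PrecubicalConn) : ∀ {n : ℕ}, P.K n → Prop :=
  fun {n} σ =>
    match n, σ with
    | 0, _ => False
    | m + 1, σ => ∃ (β : Bool) (i : ℕ) (τ : P.K m), 1 ≤ i ∧ i ≤ m ∧ σ = P.conn β m i τ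

/-- The linear extension of the face map `f_i^α` to the free `R`-module on the cubes. -/
noncomputable def Fmap (P : PrecubicalConn) (R : Type*) [CommRing R] (α : Bool) (n i : ℕ) :
    (P.K (n + 1) →₀ R) →ₗ[R] (P.K n →₀ R) :=
  Finsupp.lmapDomain R R (P.face α n i)

/-- The linear extension of the connection map `Γ_i^β` to the free `R`-module on the cubes. -/
noncomputable def Gmap (P : PrecubicalConn) (R : Type*) [CommRing R] (β : Bool) (n i : ℕ) :
    (P.K n →₀ R) →ₗ[R] (P.K (n + 1) →₀ R) :=
  Finsupp.lmapDomain R R (P.conn β n i)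

/-- The cubical boundary operator `∂ σ = ∑_{i=1}^{n+1} (-1)^i (f_i^- σ - f_i^+ σ)`. -/
noncomputable def bdry (P : PrecubicalConn) (R : Type*) [CommRing R] (n : ℕ) :
    (P.K (n + 1) →₀ R) →ₗ[R] (P.K n →₀ R) :=
  ∑ i ∈ Finset.Icc 1 (n + 1), ((-1 : R) ^ i) • (Fmap P R false n i - Fmap P R true n i)

/-- The submodule generated by the degenerate cubes. -/
noncomputable def degenSub (P : PrecubicalConn) (R : Type*) [CommRing R] (n : ℕ) :
    Submodule R (P.K n →₀ R) :=
  Submodule.span R {x | ∃ σ : P.K n, P.Degenerate σ ∧ x = Finsupp.single σ 1}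

/-- The submodule generated by the connection cubes. -/
noncomputable def connSub (P : PrecubicalConn) (R : Type*) [CommRing R] (n : ℕ) :
    Submodule R (P.K n →₀ R) :=
  Submodule.span R {x | ∃ σ : P.K n, P.IsConn σ ∧ x = Finsupp.single σ 1}

/-- The sign `±1` associated to `β ∈ {+,-}`. -/
def sgn (R : Type*) [CommRing R] (β : Bool) : R := if β then 1 else -1

/-- Theorem 3.1(i): in the non-degenerate chain complex,
`∂ Γ_1^β τ = - Γ_1^β (∑_{i=2}^{n} (-1)^i (f_i^- - f_i^+) τ)`. -/
theorem boundary_conn_one (P : PrecubicalConn) (hP : CubicalConnAxioms P)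
    (R : Type*) [CommRing R] (n : ℕ) (β : Bool) (τ : P.K (n + 1)) :
    bdry P R (n + 1) (Finsupp.single (P.conn β (n + 1) 1 τ) 1)
      - (- Gmap P R β n 1 (∑ i ∈ Finset.Icc 2 (n + 1),
          ((-1 : R) ^ i) • ((Fmap P R false n i - Fmap P R true n i) (Finsupp.single τ 1))))
      ∈ degenSub P R (n + 1) := by
  suffices h : bdry P R (n + 1) (Finsupp.single (P.conn β (n + 1) 1 τ) 1)
      = - Gmap P R β n 1 (∑ i ∈ Finset.Icc 2 (n + 1),
          ((-1 : R) ^ i) • ((Fmap P R false n i - Fmap P R true n i) (Finsupp.single τ 1))) by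
    rw [h, sub_self]
    exact Submodule.zero_mem _
  -- abbreviate the terms of the boundary sum
  set g : ℕ → (P.K (n + 1) →₀ R) := fun i =>
    ((-1 : R) ^ i) • (Finsupp.single (P.face false (n + 1) i (P.conn β (n + 1) 1 τ)) 1
      - Finsupp.single (P.face true (n + 1) i (P.conn β (n + 1) 1 τ)) 1) with hg
  have hL : bdry P R (n + 1) (Finsupp.single (P.conn β (n + 1) 1 τ) 1)
      = ∑ i ∈ Finset.Icc 1 (n + 2), g i := by
    simp [bdry, Fmap, g, Finsupp.mapDomain_single]
  have hR : - Gmap P R β n 1 (∑ i ∈ Finset.Icc 2 (n + 1),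
        ((-1 : R) ^ i) • ((Fmap P R false n i - Fmap P R true n i) (Finsupp.single τ 1)))
      = ∑ i ∈ Finset.Icc 2 (n + 1), -(((-1 : R) ^ i) •
          (Finsupp.single (P.conn β n 1 (P.face false n i τ)) 1
            - Finsupp.single (P.conn β n 1 (P.face true n i τ)) 1)) := by
    rw [map_sum, ← Finset.sum_neg_distrib]
    refine Finset.sum_congr rfl fun i _ => ?_
    rw [LinearMap.sub_apply, map_smul, map_sub]
    simp [Gmap, Fmap, Finsupp.mapDomain_single]
  rw [hL, hR]
  -- split off the first two terms of the boundary sum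
  have hsplit : Finset.Icc 1 (n + 2) = insert 1 (insert 2 (Finset.Icc 3 (n + 2))) := by
    ext x; simp [Finset.mem_Icc]; omega
  have h1 : (1 : ℕ) ∉ insert 2 (Finset.Icc 3 (n + 2)) := by simp
  have h2 : (2 : ℕ) ∉ Finset.Icc 3 (n + 2) := by simp
  rw [hsplit, Finset.sum_insert h1, Finset.sum_insert h2]
  -- the first two terms cancel
  have hface : ∀ α : Bool, P.face α (n + 1) 1 (P.conn β (n + 1) 1 τ)
      = P.face α (n + 1) 2 (P.conn β (n + 1) 1 τ) := by
    intro α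
    by_cases hab : α = β
    · subst hab
      rw [hP.face_conn_self α (n + 1) 1 1 τ le_rfl (by omega) (Or.inl rfl),
        hP.face_conn_self α (n + 1) 2 1 τ le_rfl (by omega) (Or.inr rfl)]
    · rw [hP.face_conn_opp α β n 1 1 τ le_rfl (by omega) (Or.inl rfl) hab,
        hP.face_conn_opp α β n 2 1 τ le_rfl (by omega) (Or.inr rfl) hab]
  have hcancel : g 1 + g 2 = 0 := by
    simp only [hg, hface false, hface true]
    ring_nf
    simp [pow_succ]
  rw [← add_assoc, hcancel, zero_add]
  -- reindex the remaining sum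
  have hmap : Finset.Icc 3 (n + 2) = (Finset.Icc 2 (n + 1)).map
      (addRightEmbedding 1) := by
    rw [Finset.map_add_right_Icc]
  rw [hmap, Finset.sum_map]
  refine Finset.sum_congr rfl fun i hi => ?_
  simp only [Finset.mem_Icc] at hi
  have hgt : ∀ α : Bool, P.face α (n + 1) (i + 1) (P.conn β (n + 1) 1 τ)
      = P.conn β n 1 (P.face α n i τ) := by
    intro α
    have := hP.face_conn_gt α β n (i + 1) 1 τ le_rfl (by omega) (by omega)
    simpa using this
  simp only [addRightEmbedding_apply, hg, hgt false, hgt true, pow_succ]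
  ring_nf
  rw [neg_smul]
end

section
/- In a cubical set with connections, for any singular n-cube τ, β ∈ {+,−}, and 1 < t < n: ∂_{n+1} Γ_t^β(τ) = Γ_{t-1}^β Σ_{i=1}^{t-1} (-1)^i (f_i^- − f_i^+)(τ) − Γ_t^β Σ_{i=t+1}^n (-1)^i (f_i^- − f_i^+)(τ). -/
/-- Theorem 3.1(iii): for `1 < t < n`, in the non-degenerate chain complex,
`∂ Γ_t^β τ = Γ_{t-1}^β ∑_{i=1}^{t-1} (-1)^i (f_i^- - f_i^+) τ
  - Γ_t^β ∑_{i=t+1}^{n} (-1)^i (f_i^- - f_i^+) τ`. -/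
theorem boundary_conn_middle (P : PrecubicalConn) (hP : CubicalConnAxioms P)
    (R : Type*) [CommRing R] (n t : ℕ) (β : Bool) (τ : P.K (n + 1))
    (ht1 : 1 < t) (ht2 : t < n + 1) :
    bdry P R (n + 1) (Finsupp.single (P.conn β (n + 1) t τ) 1)
      - (Gmap P R β n (t - 1) (∑ i ∈ Finset.Icc 1 (t - 1),
            ((-1 : R) ^ i) • ((Fmap P R false n i - Fmap P R true n i) (Finsupp.single τ 1)))
         - Gmap P R β n t (∑ i ∈ Finset.Icc (t + 1) (n + 1),
            ((-1 : R) ^ i) • ((Fmap P R false n i - Fmap P R true n i) (Finsupp.single τ 1))))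
      ∈ degenSub P R (n + 1) := by
  obtain ⟨s, rfl⟩ : ∃ s, t = s + 2 := ⟨t - 2, by omega⟩
  have hsn : s + 2 ≤ n := by omega
  rw [show s + 2 - 1 = s + 1 from rfl]
  set Γ : P.K (n + 2) := P.conn β (n + 1) (s + 2) τ with hΓ
  set f : ℕ → (P.K (n + 1) →₀ R) := fun i =>
    ((-1 : R) ^ i) • (Finsupp.single (P.face false (n + 1) i Γ) 1
      - Finsupp.single (P.face true (n + 1) i Γ) 1) with hf
  -- express the boundary as a sum over Ioc 0 (n+2)
  have hb : bdry P R (n + 1) (Finsupp.single Γ 1) = ∑ i ∈ Finset.Ioc 0 (n + 2), f i := by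
    have hset : Finset.Icc 1 (n + 2) = Finset.Ioc 0 (n + 2) := by
      ext x; simp only [Finset.mem_Icc, Finset.mem_Ioc]; omega
    rw [bdry, hset]
    simp [LinearMap.sum_apply, LinearMap.smul_apply, LinearMap.sub_apply, Fmap,
      Finsupp.lmapDomain_apply, Finsupp.mapDomain_single, hf]
  -- the faces equal on the middle indices
  have hmidface : ∀ α : Bool, P.face α (n + 1) (s + 2) Γ = P.face α (n + 1) (s + 3) Γ := by
    intro α
    by_cases hα : α = β
    · subst hα
      rw [hΓ, hP.face_conn_self α (n + 1) (s + 2) (s + 2) τ (by omega) (by omega) (Or.inl rfl),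
        hP.face_conn_self α (n + 1) (s + 3) (s + 2) τ (by omega) (by omega) (Or.inr rfl)]
    · rw [hΓ, hP.face_conn_opp α β n (s + 2) (s + 2) τ (by omega) (by omega) (Or.inl rfl) hα,
        hP.face_conn_opp α β n (s + 3) (s + 2) τ (by omega) (by omega) (Or.inr rfl) hα]
  have hmid0 : f (s + 2) + f (s + 3) = 0 := by
    have h3 : ((-1 : R) ^ (s + 3)) = -((-1 : R) ^ (s + 2)) := by
      rw [pow_succ]; ring
    simp only [hf, hmidface false, hmidface true, h3, neg_smul]
    abel
  -- split the boundary sum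
  have hsplit : ∑ i ∈ Finset.Ioc 0 (n + 2), f i
      = (∑ i ∈ Finset.Ioc 0 (s + 1), f i) + (f (s + 2) + f (s + 3))
        + ∑ i ∈ Finset.Ioc (s + 3) (n + 2), f i := by
    have hmidset : Finset.Ioc (s + 1) (s + 3) = {s + 2, s + 3} := by
      ext x; simp [Finset.mem_Ioc, Finset.mem_insert]; omega
    have hmidsum : ∑ i ∈ Finset.Ioc (s + 1) (s + 3), f i = f (s + 2) + f (s + 3) := by
      rw [hmidset, Finset.sum_insert (by simp), Finset.sum_singleton]
    rw [← Finset.sum_Ioc_consecutive f (Nat.zero_le (s + 1)) (show s + 1 ≤ n + 2 by omega),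
      ← Finset.sum_Ioc_consecutive f (show s + 1 ≤ s + 3 by omega) (show s + 3 ≤ n + 2 by omega),
      hmidsum]
    abel
  -- left part equals the first Gmap sum
  have hA : Gmap P R β n (s + 1) (∑ i ∈ Finset.Icc 1 (s + 1),
        ((-1 : R) ^ i) • ((Fmap P R false n i - Fmap P R true n i) (Finsupp.single τ 1)))
      = ∑ i ∈ Finset.Ioc 0 (s + 1), f i := by
    have hset : Finset.Icc 1 (s + 1) = Finset.Ioc 0 (s + 1) := by
      ext x; simp only [Finset.mem_Icc, Finset.mem_Ioc]; omega
    rw [hset, map_sum]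
    refine Finset.sum_congr rfl (fun i hi => ?_)
    obtain ⟨hi1, hi2⟩ := Finset.mem_Ioc.mp hi
    have hface : ∀ α : Bool, P.face α (n + 1) i Γ = P.conn β n (s + 1) (P.face α n i τ) := by
      intro α
      rw [hΓ]
      simpa using hP.face_conn_lt α β n i (s + 2) τ hi1 (by omega) (by omega)
    simp only [LinearMap.sub_apply, Fmap, Finsupp.lmapDomain_apply, Finsupp.mapDomain_single]
    rw [map_smul, map_sub]
    simp only [hf, Gmap, Finsupp.lmapDomain_apply, Finsupp.mapDomain_single,
      hface false, hface true]
  -- right part equals minus the second Gmap sum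
  have hB : Gmap P R β n (s + 2) (∑ i ∈ Finset.Icc (s + 2 + 1) (n + 1),
        ((-1 : R) ^ i) • ((Fmap P R false n i - Fmap P R true n i) (Finsupp.single τ 1)))
      = - ∑ i ∈ Finset.Ioc (s + 3) (n + 2), f i := by
    rw [map_sum, ← Finset.sum_neg_distrib]
    refine Finset.sum_nbij' (fun i => i + 1) (fun i => i - 1) ?_ ?_ ?_ ?_ ?_
    · intro a ha; simp only [Finset.mem_Icc] at ha; simp only [Finset.mem_Ioc]; omega
    · intro a ha; simp only [Finset.mem_Ioc] at ha; simp only [Finset.mem_Icc]; omega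
    · intro a ha; simp only [Finset.mem_Icc] at ha; show a + 1 - 1 = a; omega
    · intro a ha; simp only [Finset.mem_Ioc] at ha; show a - 1 + 1 = a; omega
    · intro i hi
      obtain ⟨hi1, hi2⟩ := Finset.mem_Icc.mp hi
      have hface : ∀ α : Bool, P.face α (n + 1) (i + 1) Γ = P.conn β n (s + 2) (P.face α n i τ) := by
        intro α
        rw [hΓ]
        simpa using hP.face_conn_gt α β n (i + 1) (s + 2) τ (by omega) (by omega) (by omega)
      have h3 : ((-1 : R) ^ (i + 1)) = -((-1 : R) ^ i) := by rw [pow_succ]; ring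
      simp only [LinearMap.sub_apply, Fmap, Finsupp.lmapDomain_apply, Finsupp.mapDomain_single]
      rw [map_smul, map_sub]
      simp only [hf, Gmap, Finsupp.lmapDomain_apply, Finsupp.mapDomain_single,
        hface false, hface true, h3, neg_smul, neg_neg]
  rw [hb, hsplit, hmid0, hA, hB]
  simp only [add_zero, sub_neg_eq_add, sub_add_eq_sub_sub]
  abel_nf
  exact Submodule.zero_mem _
end

section
/- In a cubical set with connections, the submodule Con_n(K) of the non-degenerate chain complex generated by cosets of connection cubes Γ_i^β(τ) is closed under the boundary operator: ∂_{n+1}(Con_{n+1}(K)) ⊆ Con_n(K). Hence Con(K) is a chain subcomplex of C(K). -/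
lemma single_conn_mem (P : PrecubicalConn) (R : Type*) [CommRing R] {n : ℕ}
    {σ : P.K n} (h : P.IsConn σ) :
    Finsupp.single σ (1 : R) ∈ connSub P R n ⊔ degenSub P R n :=
  Submodule.mem_sup_left (Submodule.subset_span ⟨σ, h, rfl⟩)

lemma single_degen_mem (P : PrecubicalConn) (R : Type*) [CommRing R] {n : ℕ}
    {σ : P.K n} (h : P.Degenerate σ) :
    Finsupp.single σ (1 : R) ∈ connSub P R n ⊔ degenSub P R n :=
  Submodule.mem_sup_right (Submodule.subset_span ⟨σ, h, rfl⟩)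

lemma degen_is_degenerate (P : PrecubicalConn) (hP : CubicalConnAxioms P) {m i : ℕ}
    (y : P.K m) (h1 : 1 ≤ i) (h2 : i ≤ m + 1) : P.Degenerate (P.degen m i y) :=
  ⟨i, h1, h2, by rw [hP.face_degen_eq true m i y h1 h2]⟩

lemma bdry_single (P : PrecubicalConn) (R : Type*) [CommRing R] (n : ℕ) (σ : P.K (n + 1)) :
    bdry P R n (Finsupp.single σ 1) =
      ∑ j ∈ Finset.Icc 1 (n + 1), ((-1 : R) ^ j) •
        (Finsupp.single (P.face false n j σ) 1 - Finsupp.single (P.face true n j σ) 1) := by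
  simp [bdry, Fmap, Finsupp.mapDomain_single]

lemma bdry_conn_mem (P : PrecubicalConn) (hP : CubicalConnAxioms P) (R : Type*) [CommRing R]
    (m : ℕ) (β : Bool) (i : ℕ) (τ : P.K (m + 1)) (h1 : 1 ≤ i) (h2 : i ≤ m + 1) :
    bdry P R (m + 1) (Finsupp.single (P.conn β (m + 1) i τ) 1) ∈
      connSub P R (m + 1) ⊔ degenSub P R (m + 1) := by
  rw [bdry_single]
  set g : ℕ → (P.K (m + 1) →₀ R) := fun j => ((-1 : R) ^ j) •
    (Finsupp.single (P.face false (m + 1) j (P.conn β (m + 1) i τ)) 1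
      - Finsupp.single (P.face true (m + 1) j (P.conn β (m + 1) i τ)) 1) with hg
  have hi : i ∈ Finset.Icc 1 (m + 2) := by simp only [Finset.mem_Icc]; omega
  have hi1 : i + 1 ∈ (Finset.Icc 1 (m + 2)).erase i := by
    simp only [Finset.mem_erase, Finset.mem_Icc]; omega
  rw [← Finset.add_sum_erase _ g hi, ← Finset.add_sum_erase _ g hi1, ← add_assoc]
  have hsum : ((-1 : R) ^ i + (-1 : R) ^ (i + 1)) = 0 := by rw [pow_succ]; ring
  have hself1 := hP.face_conn_self β (m + 1) i i τ h1 h2 (Or.inl rfl)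
  have hself2 := hP.face_conn_self β (m + 1) (i + 1) i τ h1 h2 (Or.inr rfl)
  have hpair : g i + g (i + 1) = 0 := by
    cases β with
    | false =>
      have hopp1 := hP.face_conn_opp true false m i i τ h1 h2 (Or.inl rfl) (by simp)
      have hopp2 := hP.face_conn_opp true false m (i + 1) i τ h1 h2 (Or.inr rfl) (by simp)
      rw [hg]
      simp only [hself1, hself2, hopp1, hopp2]
      rw [← add_smul, hsum, zero_smul]
    | true =>
      have hopp1 := hP.face_conn_opp false true m i i τ h1 h2 (Or.inl rfl) (by simp)
      have hopp2 := hP.face_conn_opp false true m (i + 1) i τ h1 h2 (Or.inr rfl) (by simp)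
      rw [hg]
      simp only [hself1, hself2, hopp1, hopp2]
      rw [← add_smul, hsum, zero_smul]
  rw [hpair, zero_add]
  refine Submodule.sum_mem _ fun j hj => ?_
  simp only [Finset.mem_erase, Finset.mem_Icc] at hj
  obtain ⟨hj1, hj2, hj3, hj4⟩ := hj
  have key : ∀ α : Bool, P.IsConn (P.face α (m + 1) j (P.conn β (m + 1) i τ)) := by
    intro α
    by_cases hji : j < i
    · rw [hP.face_conn_lt α β m j i τ hj3 hji h2]
      exact ⟨β, i - 1, P.face α m j τ, by omega, by omega, rfl⟩
    · have hgt : i + 1 < j := by omega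
      rw [hP.face_conn_gt α β m j i τ h1 hgt hj4]
      exact ⟨β, i, P.face α m (j - 1) τ, h1, by omega, rfl⟩
  exact Submodule.smul_mem _ _ (Submodule.sub_mem _
    (single_conn_mem P R (key false)) (single_conn_mem P R (key true)))

lemma bdry_degen_mem (P : PrecubicalConn) (hP : CubicalConnAxioms P) (R : Type*) [CommRing R]
    (n : ℕ) (σ : P.K (n + 1)) (h : P.Degenerate σ) :
    bdry P R n (Finsupp.single σ 1) ∈ connSub P R n ⊔ degenSub P R n := by
  obtain ⟨i, h1, h2, hσ⟩ := h
  rw [bdry_single]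
  set g : ℕ → (P.K n →₀ R) := fun j => ((-1 : R) ^ j) •
    (Finsupp.single (P.face false n j σ) 1 - Finsupp.single (P.face true n j σ) 1) with hg
  have hi : i ∈ Finset.Icc 1 (n + 1) := by simp only [Finset.mem_Icc]; omega
  rw [← Finset.add_sum_erase _ g hi]
  have hzero : g i = 0 := by
    have e1 : P.face false n i σ = P.face true n i σ := by
      conv_lhs => rw [hσ]
      rw [hP.face_degen_eq false n i _ h1 h2]
    rw [hg]; simp only [e1, sub_self, smul_zero]
  rw [hzero, zero_add]
  refine Submodule.sum_mem _ fun j hj => ?_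
  simp only [Finset.mem_erase, Finset.mem_Icc] at hj
  obtain ⟨hj1, hj2, hj3⟩ := hj
  obtain ⟨m, rfl⟩ : ∃ m, n = m + 1 := ⟨n - 1, by omega⟩
  have key : ∀ α : Bool, P.Degenerate (P.face α (m + 1) j σ) := by
    intro α
    by_cases hji : j < i
    · rw [hσ, hP.face_degen_lt α m j i _ hj2 hji h2]
      exact degen_is_degenerate P hP _ (by omega) (by omega)
    · have hgt : i < j := by omega
      rw [hσ, hP.face_degen_gt α m j i _ h1 hgt hj3]
      exact degen_is_degenerate P hP _ h1 (by omega)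
  exact Submodule.smul_mem _ _ (Submodule.sub_mem _
    (single_degen_mem P R (key false)) (single_degen_mem P R (key true)))

/-- The connections generate a chain subcomplex of the non-degenerate chain complex:
the boundary of a chain in the submodule generated by connection cubes (taken together
with the degenerate cubes, which are killed in the non-degenerate chain complex) again
lies in that submodule. -/
theorem boundary_connSub_subset (P : PrecubicalConn) (hP : CubicalConnAxioms P)
    (R : Type*) [CommRing R] (n : ℕ) (x : P.K (n + 1) →₀ R)
    (hx : x ∈ connSub P R (n + 1) ⊔ degenSub P R (n + 1)) :
    bdry P R n x ∈ connSub P R n ⊔ degenSub P R n := by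
  unfold connSub degenSub at hx
  rw [← Submodule.span_union] at hx
  induction hx using Submodule.span_induction with
  | mem x hx =>
    rcases hx with ⟨σ, hσ, rfl⟩ | ⟨σ, hσ, rfl⟩
    · obtain ⟨β, i, τ, h1, h2, rfl⟩ := hσ
      obtain ⟨m, rfl⟩ : ∃ m, n = m + 1 := ⟨n - 1, by omega⟩
      exact bdry_conn_mem P hP R m β i τ h1 h2
    · exact bdry_degen_mem P hP R n σ hσ
  | zero => simp
  | add x y _ _ hx hy => rw [map_add]; exact Submodule.add_mem _ hx hy
  | smul r x _ hx => rw [map_smul]; exact Submodule.smul_mem _ _ hx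
end

section
/- In a cubical set with connections, for a singular n-cube τ with n ≥ 2 and β ∈ {+,−}: ∂_{n+1} Σ_{j=1}^{n} (-1)^j Γ_j^β(τ) + Σ_{j=1}^{n-1} (-1)^j Γ_j^β ∂_n(τ) = 0. -/
/-- Corollary 3.3(iv): for `n ≥ 2`, in the non-degenerate chain complex,
`∂ ∑_{j=1}^{n} (-1)^j Γ_j^β τ + ∑_{j=1}^{n-1} (-1)^j Γ_j^β ∂ τ = 0`. -/
theorem alternating_conn_full_sum (P : PrecubicalConn) (hP : CubicalConnAxioms P)
    (R : Type*) [CommRing R] (n : ℕ) (hn : 1 ≤ n) (β : Bool) (τ : P.K (n + 1)) :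
    (bdry P R (n + 1) (∑ j ∈ Finset.Icc 1 (n + 1),
          ((-1 : R) ^ j) • Finsupp.single (P.conn β (n + 1) j τ) 1)
        + ∑ j ∈ Finset.Icc 1 n,
          ((-1 : R) ^ j) • Gmap P R β n j (bdry P R n (Finsupp.single τ 1)))
      ∈ degenSub P R (n + 1) := by
  classical
  set g : ℕ × ℕ → (P.K (n + 1) →₀ R) := fun p =>
    ((-1 : R) ^ (p.1 + p.2)) •
      (Finsupp.single (P.face false (n + 1) p.2 (P.conn β (n + 1) p.1 τ)) 1
        - Finsupp.single (P.face true (n + 1) p.2 (P.conn β (n + 1) p.1 τ)) 1) with hg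
  set h : ℕ × ℕ → (P.K (n + 1) →₀ R) := fun p =>
    ((-1 : R) ^ (p.1 + p.2)) •
      (Finsupp.single (P.conn β n p.1 (P.face false n p.2 τ)) 1
        - Finsupp.single (P.conn β n p.1 (P.face true n p.2 τ)) 1) with hh
  have hT1 : bdry P R (n + 1) (∑ j ∈ Finset.Icc 1 (n + 1),
        ((-1 : R) ^ j) • Finsupp.single (P.conn β (n + 1) j τ) 1)
      = ∑ p ∈ Finset.Icc 1 (n + 1) ×ˢ Finset.Icc 1 (n + 2), g p := by
    rw [Finset.sum_product]
    rw [map_sum]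
    refine Finset.sum_congr rfl fun j hj => ?_
    rw [map_smul, bdry, LinearMap.sum_apply, Finset.smul_sum]
    refine Finset.sum_congr rfl fun i hi => ?_
    simp only [hg, LinearMap.smul_apply, LinearMap.sub_apply, Fmap, Finsupp.lmapDomain_apply,
      Finsupp.mapDomain_single, smul_smul, pow_add]
  have hT2 : (∑ j ∈ Finset.Icc 1 n,
        ((-1 : R) ^ j) • Gmap P R β n j (bdry P R n (Finsupp.single τ 1)))
      = ∑ p ∈ Finset.Icc 1 n ×ˢ Finset.Icc 1 (n + 1), h p := by
    rw [Finset.sum_product]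
    refine Finset.sum_congr rfl fun j hj => ?_
    rw [bdry, LinearMap.sum_apply, map_sum, Finset.smul_sum]
    refine Finset.sum_congr rfl fun i hi => ?_
    simp only [hh, LinearMap.smul_apply, LinearMap.sub_apply, Fmap, Gmap,
      Finsupp.lmapDomain_apply, Finsupp.mapDomain_single, map_smul, map_sub,
        smul_smul, pow_add]
  rw [hT1, hT2]
  have hz : (∑ p ∈ Finset.Icc 1 (n + 1) ×ˢ Finset.Icc 1 (n + 2), g p)
      + ∑ p ∈ Finset.Icc 1 n ×ˢ Finset.Icc 1 (n + 1), h p = 0 := by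
    rw [← Finset.sum_filter_add_sum_filter_not
      (Finset.Icc 1 (n + 1) ×ˢ Finset.Icc 1 (n + 2))
      (fun p => p.2 = p.1 ∨ p.2 = p.1 + 1) g]
    have hdiag : ∑ p ∈ (Finset.Icc 1 (n + 1) ×ˢ Finset.Icc 1 (n + 2)).filter
        (fun p => p.2 = p.1 ∨ p.2 = p.1 + 1), g p = 0 := by
      rw [Finset.sum_filter, Finset.sum_product]
      refine Finset.sum_eq_zero fun j hj => ?_
      rw [Finset.mem_Icc] at hj
      have hset : (Finset.Icc 1 (n + 2)).filter (fun i => ((j, i).2 = (j, i).1 ∨ (j, i).2 = (j, i).1 + 1)) = {j, j + 1} := by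
        ext i
        simp only [Finset.mem_filter, Finset.mem_Icc, Finset.mem_insert, Finset.mem_singleton]
        omega
      rw [← Finset.sum_filter, hset]
      have hne : j ∉ ({j + 1} : Finset ℕ) := by simp
      rw [Finset.sum_insert hne, Finset.sum_singleton]
      have hfaces : ∀ α : Bool, P.face α (n + 1) j (P.conn β (n + 1) j τ)
          = P.face α (n + 1) (j + 1) (P.conn β (n + 1) j τ) := by
        intro α
        by_cases hab : α = β
        · subst hab
          rw [hP.face_conn_self α (n + 1) j j τ hj.1 hj.2 (Or.inl rfl),
            hP.face_conn_self α (n + 1) (j + 1) j τ hj.1 hj.2 (Or.inr rfl)]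
        · rw [hP.face_conn_opp α β n j j τ hj.1 hj.2 (Or.inl rfl) hab,
            hP.face_conn_opp α β n (j + 1) j τ hj.1 hj.2 (Or.inr rfl) hab]
      simp only [hg, hfaces false, hfaces true,
        show j + (j + 1) = (j + j) + 1 from by omega, pow_succ, mul_neg_one, neg_smul]
      exact add_neg_cancel _
    have hoff : ∑ p ∈ (Finset.Icc 1 (n + 1) ×ˢ Finset.Icc 1 (n + 2)).filter
        (fun p => ¬(p.2 = p.1 ∨ p.2 = p.1 + 1)), g p
        = ∑ p ∈ Finset.Icc 1 n ×ˢ Finset.Icc 1 (n + 1), -h p := by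
      refine Finset.sum_nbij' (fun p => if p.2 < p.1 then (p.1 - 1, p.2) else (p.1, p.2 - 1))
        (fun p => if p.2 ≤ p.1 then (p.1 + 1, p.2) else (p.1, p.2 + 1)) ?_ ?_ ?_ ?_ ?_
      · rintro ⟨j, i⟩ hp
        simp only [Finset.mem_filter, Finset.mem_product, Finset.mem_Icc] at hp
        dsimp only
        split_ifs <;> simp only [Finset.mem_product, Finset.mem_Icc] <;> omega
      · rintro ⟨j, i⟩ hp
        simp only [Finset.mem_product, Finset.mem_Icc] at hp
        dsimp only
        split_ifs <;>
          simp only [Finset.mem_filter, Finset.mem_product, Finset.mem_Icc] <;> omega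
      · rintro ⟨j, i⟩ hp
        simp only [Finset.mem_filter, Finset.mem_product, Finset.mem_Icc] at hp
        dsimp only
        split_ifs <;> simp_all [Prod.ext_iff] <;> omega
      · rintro ⟨j, i⟩ hp
        simp only [Finset.mem_product, Finset.mem_Icc] at hp
        dsimp only
        split_ifs <;> simp_all [Prod.ext_iff] <;> omega
      · rintro ⟨j, i⟩ hp
        simp only [Finset.mem_filter, Finset.mem_product, Finset.mem_Icc] at hp
        obtain ⟨⟨⟨hj1, hj2⟩, hi1, hi2⟩, hne⟩ := hp
        dsimp only
        rcases lt_or_gt_of_ne (show i ≠ j by omega) with hlt | hgt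
        · -- i < j
          obtain ⟨k, rfl⟩ : ∃ k, j = k + 1 := ⟨j - 1, by omega⟩
          have hif : ((if i < k + 1 then (k + 1 - 1, i) else (k + 1, i - 1)) : ℕ × ℕ) = (k, i) := by
            simp [Nat.lt_succ_of_lt, hlt]
          rw [hif]
          simp only [hg, hh,
            hP.face_conn_lt false β n i (k + 1) τ hi1 hlt (by omega),
            hP.face_conn_lt true β n i (k + 1) τ hi1 hlt (by omega)]
          simp only [Nat.add_sub_cancel]
          rw [show k + 1 + i = (k + i) + 1 from by omega, pow_succ, mul_neg_one, neg_smul]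
        · -- i > j + 1
          have hgt' : j + 1 < i := by omega
          obtain ⟨m, rfl⟩ : ∃ m, i = m + 1 := ⟨i - 1, by omega⟩
          have hif : ((if m + 1 < j then (j - 1, m + 1) else (j, m + 1 - 1)) : ℕ × ℕ) = (j, m) := by
            have : ¬ (m + 1 < j) := by omega
            simp [this]
          rw [hif]
          simp only [hg, hh,
            hP.face_conn_gt false β n (m + 1) j τ hj1 hgt' hi2,
            hP.face_conn_gt true β n (m + 1) j τ hj1 hgt' hi2]
          simp only [Nat.add_sub_cancel]
          rw [show j + (m + 1) = (j + m) + 1 from by omega, pow_succ, mul_neg_one, neg_smul]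
    rw [hdiag, hoff, Finset.sum_neg_distrib]
    abel
  rw [hz]
  exact Submodule.zero_mem _
end

section
/- In a cubical set with connections, if a non-degenerate n-cube θ satisfies θ = Γ_t^α(σ) = Γ_s^β(τ) with s > t+1, then θ = Γ_t^α(Γ_{s-1}^β(δ)) = Γ_s^β(Γ_t^α(δ)) where δ = f_t^α(τ) = f_{t+1}^α(τ) = f_s^β(σ) = f_{s-1}^β(σ). -/
/-- Lemma 3.7(ii): if a non-degenerate cube `θ` has two connection representations
`θ = Γ_t^α σ = Γ_s^β τ` with `s > t + 1`, then
`θ = Γ_t^α (Γ_{s-1}^β δ) = Γ_s^β (Γ_t^α δ)` where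
`δ = f_t^α τ = f_{t+1}^α τ = f_s^β σ = f_{s-1}^β σ`. -/
theorem conn_representation_commute (P : PrecubicalConn) (hP : CubicalConnAxioms P)
    (n s t : ℕ) (α β : Bool) (σ τ : P.K (n + 1)) (θ : P.K (n + 2))
    (hθ : ¬ P.Degenerate θ)
    (ht1 : 1 ≤ t) (hs2 : s ≤ n + 1) (hst : t + 1 < s)
    (h1 : θ = P.conn α (n + 1) t σ) (h2 : θ = P.conn β (n + 1) s τ) :
    ∃ δ : P.K n,
      δ = P.face α n t τ ∧ δ = P.face α n (t + 1) τ ∧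
      δ = P.face β n s σ ∧ δ = P.face β n (s - 1) σ ∧
      θ = P.conn α (n + 1) t (P.conn β n (s - 1) δ) ∧
      θ = P.conn β (n + 1) s (P.conn α n t δ) := by
  have ht : t ≤ n := by omega
  have hs1 : 1 ≤ s := by omega
  set δ := P.face β n (s - 1) σ with hδ
  have hτ : τ = P.conn α n t δ := by
    have e1 : P.face β (n + 1) s θ = τ := by
      rw [h2]; exact hP.face_conn_self β (n + 1) s s τ hs1 hs2 (Or.inl rfl)
    have e2 : P.face β (n + 1) s θ = P.conn α n t δ := by
      rw [h1]; exact hP.face_conn_gt β α n s t σ ht1 hst (by omega)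
    rw [← e1, e2]
  have hfs : P.face β n s σ = δ := by
    have e1 : P.face β (n + 1) (s + 1) θ = τ := by
      rw [h2]; exact hP.face_conn_self β (n + 1) (s + 1) s τ hs1 hs2 (Or.inr rfl)
    have e2 : P.face β (n + 1) (s + 1) θ = P.conn α n t (P.face β n s σ) := by
      rw [h1]
      have := hP.face_conn_gt β α n (s + 1) t σ ht1 (by omega) (by omega)
      simpa using this
    have e3 : P.conn α n t (P.face β n s σ) = P.conn α n t δ := by
      rw [← e2, e1, hτ]
    have := congrArg (P.face α n t) e3
    rwa [hP.face_conn_self α n t t _ ht1 ht (Or.inl rfl),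
         hP.face_conn_self α n t t _ ht1 ht (Or.inl rfl)] at this
  have hft : P.face α n t τ = δ := by
    rw [hτ]; exact hP.face_conn_self α n t t δ ht1 ht (Or.inl rfl)
  have hft1 : P.face α n (t + 1) τ = δ := by
    rw [hτ]; exact hP.face_conn_self α n (t + 1) t δ ht1 ht (Or.inr rfl)
  have hσ : σ = P.conn β n (s - 1) δ := by
    have e1 : P.face α (n + 1) t θ = σ := by
      rw [h1]; exact hP.face_conn_self α (n + 1) t t σ ht1 (by omega) (Or.inl rfl)
    have e2 : P.face α (n + 1) t θ = P.conn β n (s - 1) δ := by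
      rw [h2, hP.face_conn_lt α β n t s τ ht1 (by omega) hs2, hft]
    rw [← e1, e2]
  exact ⟨δ, hft.symm, hft1.symm, hfs.symm, rfl,
    by rw [h1, hσ], by rw [h2, hτ]⟩
end

section
/- In a cubical set with connections, every n-cube τ has a unique maximal face ρ that is neither degenerate nor a connection, and if τ is degenerate or a connection then ρ is a proper subface and τ = g_k ⋯ g_1(ρ) for suitable degeneracy and connection maps g_1,…,g_k. -/
/-- `FaceOf P τ σ` means that `τ` is an iterated face of `σ` (possibly `τ = σ`). -/
inductive FaceOf (P : PrecubicalConn) : ∀ {k m : ℕ}, P.K k → P.K m → Prop where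
  | refl {m : ℕ} (σ : P.K m) : FaceOf P σ σ
  | step {k m : ℕ} {τ : P.K k} {σ : P.K (m + 1)} (α : Bool) (i : ℕ)
      (h1 : 1 ≤ i) (h2 : i ≤ m + 1) (h : FaceOf P τ (P.face α m i σ)) : FaceOf P τ σ

/-- `DCImage P τ ρ` means that `τ = g_k ⋯ g_1 ρ` for some (possibly empty) sequence of
degeneracy and connection maps `g_1, …, g_k`. -/
inductive DCImage (P : PrecubicalConn) : ∀ {m k : ℕ}, P.K m → P.K k → Prop where
  | refl {m : ℕ} (σ : P.K m) : DCImage P σ σ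
  | degen {m k : ℕ} {σ : P.K m} {ρ : P.K k} (i : ℕ) (h1 : 1 ≤ i) (h2 : i ≤ m + 1)
      (h : DCImage P σ ρ) : DCImage P (P.degen m i σ) ρ
  | conn {m k : ℕ} {σ : P.K m} {ρ : P.K k} (β : Bool) (i : ℕ) (h1 : 1 ≤ i) (h2 : i ≤ m)
      (h : DCImage P σ ρ) : DCImage P (P.conn β m i σ) ρ

/-- `ConnImage P τ ρ` means that `τ = g_k ⋯ g_1 ρ` for some (possibly empty) sequence of
connection maps `g_1, …, g_k`. -/
inductive ConnImage (P : PrecubicalConn) : ∀ {m k : ℕ}, P.K m → P.K k → Prop where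
  | refl {m : ℕ} (σ : P.K m) : ConnImage P σ σ
  | conn {m k : ℕ} {σ : P.K m} {ρ : P.K k} (β : Bool) (i : ℕ) (h1 : 1 ≤ i) (h2 : i ≤ m)
      (h : ConnImage P σ ρ) : ConnImage P (P.conn β m i σ) ρ

section Aux

variable {P : PrecubicalConn}

lemma aux_degen_degenerate (hP : CubicalConnAxioms P) {m i : ℕ} (h1 : 1 ≤ i) (h2 : i ≤ m + 1)
    (σ : P.K m) : P.Degenerate (P.degen m i σ) :=
  ⟨i, h1, h2, by rw [hP.face_degen_eq true m i σ h1 h2]⟩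

lemma aux_conn_isConn {m i : ℕ} (β : Bool) (h1 : 1 ≤ i) (h2 : i ≤ m) (σ : P.K m) :
    P.IsConn (P.conn β m i σ) := ⟨β, i, σ, h1, h2, rfl⟩

lemma aux_faceOf_le {k m : ℕ} {ρ : P.K k} {σ : P.K m} (h : FaceOf P ρ σ) : k ≤ m := by
  induction h with
  | refl => exact le_refl _
  | step α i h1 h2 h ih => omega

lemma aux_faceOf_eq {k : ℕ} {ρ σ : P.K k} (h : FaceOf P ρ σ) : ρ = σ := by
  cases h with
  | refl => rfl
  | step α i h1 h2 h => exact absurd (aux_faceOf_le h) (by omega)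

lemma aux_faceB (hP : CubicalConnAxioms P) {k m' : ℕ} {ρ : P.K k} {τ : P.K m'}
    (h : FaceOf P ρ τ) :
    ∀ (m i : ℕ) (σ : P.K m), 1 ≤ i → i ≤ m + 1 → m' = m + 1 →
      HEq τ (P.degen m i σ) → ¬ P.Degenerate ρ → FaceOf P ρ σ := by
  induction h with
  | refl σ0 =>
    intro m i σ h1 h2 hm hτ hnd
    subst hm
    rw [eq_of_heq hτ] at hnd
    exact absurd (aux_degen_degenerate hP h1 h2 σ) hnd
  | step α j hj1 hj2 hsub ih =>
    rename_i m0 ρ0 τ0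
    intro m i σ h1 h2 hm hτ hnd
    obtain rfl : m = m0 := by omega
    have hτ' := eq_of_heq hτ
    subst hτ'
    rcases Nat.lt_trichotomy j i with hji | hji | hji
    · -- j < i, so i ≥ 2 and m ≥ 1
      obtain ⟨m1, rfl⟩ : ∃ m1, m = m1 + 1 := ⟨m - 1, by omega⟩
      have heqn := hP.face_degen_lt α m1 j i σ hj1 hji h2
      exact FaceOf.step α j hj1 (by omega)
        (ih (m1) (i - 1) (P.face α m1 j σ) (by omega) (by omega) rfl
          (heqn ▸ HEq.rfl) hnd)
    · subst hji
      rw [hP.face_degen_eq α m j σ h1 h2] at hsub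
      exact hsub
    · -- i < j
      obtain ⟨m1, rfl⟩ : ∃ m1, m = m1 + 1 := ⟨m - 1, by omega⟩
      have heqn := hP.face_degen_gt α m1 j i σ h1 hji hj2
      exact FaceOf.step α (j - 1) (by omega) (by omega)
        (ih m1 i (P.face α m1 (j - 1) σ) h1 (by omega) rfl (heqn ▸ HEq.rfl) hnd)

lemma aux_faceC (hP : CubicalConnAxioms P) {k m' : ℕ} {ρ : P.K k} {τ : P.K m'}
    (h : FaceOf P ρ τ) :
    ∀ (m i : ℕ) (β : Bool) (σ : P.K m), 1 ≤ i → i ≤ m → m' = m + 1 →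
      HEq τ (P.conn β m i σ) → ¬ P.Degenerate ρ → ¬ P.IsConn ρ → FaceOf P ρ σ := by
  induction h with
  | refl σ0 =>
    intro m i β σ h1 h2 hm hτ hnd hnc
    subst hm
    rw [eq_of_heq hτ] at hnc
    exact absurd (aux_conn_isConn β h1 h2 σ) hnc
  | step α j hj1 hj2 hsub ih =>
    rename_i m0 ρ0 τ0
    intro m i β σ h1 h2 hm hτ hnd hnc
    obtain rfl : m = m0 := by omega
    have hτ' := eq_of_heq hτ
    subst hτ'
    by_cases hji : j = i ∨ j = i + 1
    · by_cases hab : α = β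
      · subst hab
        rw [hP.face_conn_self α m j i σ h1 h2 hji] at hsub
        exact hsub
      · obtain ⟨m1, rfl⟩ : ∃ m1, m = m1 + 1 := ⟨m - 1, by omega⟩
        have heqn := hP.face_conn_opp α β m1 j i σ h1 h2 hji hab
        rw [heqn] at hsub
        exact FaceOf.step α i h1 (by omega)
          (aux_faceB hP hsub m1 i (P.face α m1 i σ) h1 (by omega) rfl HEq.rfl hnd)
    · rcases Nat.lt_or_ge j i with hlt | hge
      · -- j < i, so i ≥ 2, m ≥ 2
        obtain ⟨m1, rfl⟩ : ∃ m1, m = m1 + 1 := ⟨m - 1, by omega⟩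
        have heqn := hP.face_conn_lt α β m1 j i σ hj1 hlt (by omega)
        exact FaceOf.step α j hj1 (by omega)
          (ih m1 (i - 1) β (P.face α m1 j σ) (by omega) (by omega) rfl
            (heqn ▸ HEq.rfl) hnd hnc)
      · -- j ≥ i and not (j = i ∨ j = i+1), so j > i + 1
        have hgt : i + 1 < j := by omega
        obtain ⟨m1, rfl⟩ : ∃ m1, m = m1 + 1 := ⟨m - 1, by omega⟩
        have heqn := hP.face_conn_gt α β m1 j i σ h1 hgt hj2
        exact FaceOf.step α (j - 1) (by omega) (by omega)
          (ih m1 i β (P.face α m1 (j - 1) σ) h1 (by omega) rfl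
            (heqn ▸ HEq.rfl) hnd hnc)

lemma aux_main (P : PrecubicalConn) (hP : CubicalConnAxioms P) :
    ∀ (n : ℕ) (τ : P.K n),
    ∃ (k : ℕ) (ρ : P.K k),
      FaceOf P ρ τ ∧ ¬ P.Degenerate ρ ∧ ¬ P.IsConn ρ ∧
      (∀ (k' : ℕ) (ρ' : P.K k'), FaceOf P ρ' τ → ¬ P.Degenerate ρ' → ¬ P.IsConn ρ' →
        FaceOf P ρ' ρ) ∧
      (∀ (k' : ℕ) (ρ' : P.K k'), FaceOf P ρ' τ → ¬ P.Degenerate ρ' → ¬ P.IsConn ρ' →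
        (∀ (k'' : ℕ) (ρ'' : P.K k''), FaceOf P ρ'' τ → ¬ P.Degenerate ρ'' → ¬ P.IsConn ρ'' →
          FaceOf P ρ'' ρ') →
        k' = k ∧ HEq ρ' ρ) ∧
      ((P.Degenerate τ ∨ P.IsConn τ) → k < n ∧ DCImage P τ ρ) := by
  intro n
  induction n using Nat.strong_induction_on with
  | _ n ih =>
  intro τ
  by_cases hd : P.Degenerate τ
  · -- τ is degenerate; then n = m + 1
    cases n with
    | zero => exact hd.elim
    | succ m =>
      obtain ⟨i, h1, h2, heq⟩ := hd
      obtain ⟨k, ρ, hface, hnd, hnc, hmax, huniq, hdc⟩ :=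
        ih m (by omega) (P.face true m i τ)
      have hρτ : FaceOf P ρ τ := FaceOf.step true i h1 h2 hface
      have hmaxτ : ∀ (k' : ℕ) (ρ' : P.K k'), FaceOf P ρ' τ → ¬ P.Degenerate ρ' →
          ¬ P.IsConn ρ' → FaceOf P ρ' ρ := by
        intro k' ρ' hf hnd' hnc'
        exact hmax k' ρ'
          (aux_faceB hP hf m i (P.face true m i τ) h1 h2 rfl (heq_of_eq heq) hnd')
          hnd' hnc'
      have hσρ : DCImage P (P.face true m i τ) ρ := by
        by_cases hds : P.Degenerate (P.face true m i τ) ∨ P.IsConn (P.face true m i τ)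
        · exact (hdc hds).2
        · push_neg at hds
          have h1' := hmax m (P.face true m i τ) (FaceOf.refl _) hds.1 hds.2
          have hk : k = m := le_antisymm (aux_faceOf_le hface) (aux_faceOf_le h1')
          subst hk
          rw [aux_faceOf_eq hface]
          exact DCImage.refl _
      refine ⟨k, ρ, hρτ, hnd, hnc, hmaxτ, ?_, ?_⟩
      · intro k' ρ' hf' hnd' hnc' hmax'
        have hρ'ρ : FaceOf P ρ' ρ := hmaxτ k' ρ' hf' hnd' hnc'
        have hρρ' : FaceOf P ρ ρ' := hmax' k ρ hρτ hnd hnc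
        have hk : k' = k := le_antisymm (aux_faceOf_le hρ'ρ) (aux_faceOf_le hρρ')
        subst hk
        exact ⟨rfl, heq_of_eq (aux_faceOf_eq hρ'ρ)⟩
      · intro _
        refine ⟨by have := aux_faceOf_le hface; omega, ?_⟩
        rw [heq]
        exact DCImage.degen i h1 h2 hσρ
  · by_cases hc : P.IsConn τ
    · -- τ is a connection; n = m + 1
      cases n with
      | zero => exact hc.elim
      | succ m =>
        obtain ⟨β, i, π, h1, h2, heq⟩ := hc
        obtain ⟨k, ρ, hface, hnd, hnc, hmax, huniq, hdc⟩ := ih m (by omega) π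
        have hfστ : P.face β m i τ = π := by
          rw [heq]; exact hP.face_conn_self β m i i π h1 h2 (Or.inl rfl)
        have hρτ : FaceOf P ρ τ :=
          FaceOf.step β i h1 (by omega) (by rw [hfστ]; exact hface)
        have hmaxτ : ∀ (k' : ℕ) (ρ' : P.K k'), FaceOf P ρ' τ → ¬ P.Degenerate ρ' →
            ¬ P.IsConn ρ' → FaceOf P ρ' ρ := by
          intro k' ρ' hf hnd' hnc'
          exact hmax k' ρ'
            (aux_faceC hP hf m i β π h1 h2 rfl (heq_of_eq heq) hnd' hnc') hnd' hnc'
        have hσρ : DCImage P π ρ := by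
          by_cases hds : P.Degenerate π ∨ P.IsConn π
          · exact (hdc hds).2
          · push_neg at hds
            have h1' := hmax m π (FaceOf.refl _) hds.1 hds.2
            have hk : k = m := le_antisymm (aux_faceOf_le hface) (aux_faceOf_le h1')
            subst hk
            rw [aux_faceOf_eq hface]
            exact DCImage.refl _
        refine ⟨k, ρ, hρτ, hnd, hnc, hmaxτ, ?_, ?_⟩
        · intro k' ρ' hf' hnd' hnc' hmax'
          have hρ'ρ : FaceOf P ρ' ρ := hmaxτ k' ρ' hf' hnd' hnc'
          have hρρ' : FaceOf P ρ ρ' := hmax' k ρ hρτ hnd hnc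
          have hk : k' = k := le_antisymm (aux_faceOf_le hρ'ρ) (aux_faceOf_le hρρ')
          subst hk
          exact ⟨rfl, heq_of_eq (aux_faceOf_eq hρ'ρ)⟩
        · intro _
          refine ⟨by have := aux_faceOf_le hface; omega, ?_⟩
          rw [heq]
          exact DCImage.conn β i h1 h2 hσρ
    · -- τ itself is the maximal nondegenerate non-connection face
      refine ⟨n, τ, FaceOf.refl τ, hd, hc, fun k' ρ' hf _ _ => hf, ?_, ?_⟩
      · intro k' ρ' hf' hnd' hnc' hmax'
        have hτρ' : FaceOf P τ ρ' := hmax' n τ (FaceOf.refl τ) hd hc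
        have hk : k' = n := le_antisymm (aux_faceOf_le hf') (aux_faceOf_le hτρ')
        subst hk
        exact ⟨rfl, heq_of_eq (aux_faceOf_eq hf')⟩
      · rintro (h | h)
        exacts [absurd h hd, absurd h hc]

end Aux

/-- Lemma A.2: every cube `τ` has a unique maximal face `ρ` that is neither degenerate
nor a connection; moreover, if `τ` is degenerate or a connection, then `ρ` is a proper
face of `τ` and `τ` is obtained from `ρ` by applying degeneracy and connection maps. -/
theorem exists_unique_maximal_nondegenerate_nonconnection_face
    (P : PrecubicalConn) (hP : CubicalConnAxioms P) (n : ℕ) (τ : P.K n) :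
    ∃ (k : ℕ) (ρ : P.K k),
      FaceOf P ρ τ ∧ ¬ P.Degenerate ρ ∧ ¬ P.IsConn ρ ∧
      (∀ (k' : ℕ) (ρ' : P.K k'), FaceOf P ρ' τ → ¬ P.Degenerate ρ' → ¬ P.IsConn ρ' →
        FaceOf P ρ' ρ) ∧
      (∀ (k' : ℕ) (ρ' : P.K k'), FaceOf P ρ' τ → ¬ P.Degenerate ρ' → ¬ P.IsConn ρ' →
        (∀ (k'' : ℕ) (ρ'' : P.K k''), FaceOf P ρ'' τ → ¬ P.Degenerate ρ'' → ¬ P.IsConn ρ'' →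
          FaceOf P ρ'' ρ') →
        k' = k ∧ HEq ρ' ρ) ∧
      ((P.Degenerate τ ∨ P.IsConn τ) → k < n ∧ DCImage P τ ρ) := by
  exact aux_main P hP n τ
end

section
/- In a cubical set with connections, if τ is a non-degenerate n-cube and ρ is its unique maximal face that is neither degenerate nor a connection, then τ = g_k ⋯ g_1(ρ) where all g_1,…,g_k are connection maps (no degeneracy maps needed). -/
section Aux

variable {P : PrecubicalConn}

theorem FaceOf.trans' {a b c : ℕ} {x : P.K a} {y : P.K b} {z : P.K c}
    (h1 : FaceOf P x y) (h2 : FaceOf P y z) : FaceOf P x z := by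
  induction h2 with
  | refl => exact h1
  | step α i hi1 hi2 h ih => exact FaceOf.step α i hi1 hi2 (ih h1)

theorem FaceOf.dim_le {a b : ℕ} {x : P.K a} {y : P.K b} (h : FaceOf P x y) : a ≤ b := by
  induction h with
  | refl => exact le_rfl
  | step α i hi1 hi2 h ih => omega

theorem FaceOf.heq_of_dim_eq {a b : ℕ} {x : P.K a} {y : P.K b} (h : FaceOf P x y)
    (hab : a = b) : HEq x y := by
  cases h with
  | refl => exact HEq.rfl
  | step α i hi1 hi2 h => exact absurd h.dim_le (by omega)

theorem degen_degenerate (hP : CubicalConnAxioms P) {m : ℕ} (i : ℕ) (σ : P.K m)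
    (h1 : 1 ≤ i) (h2 : i ≤ m + 1) : P.Degenerate (P.degen m i σ) :=
  ⟨i, h1, h2, by rw [hP.face_degen_eq true m i σ h1 h2]⟩

theorem conn_isConn {m : ℕ} (β : Bool) (i : ℕ) (σ : P.K m)
    (h1 : 1 ≤ i) (h2 : i ≤ m) : P.IsConn (P.conn β m i σ) :=
  ⟨β, i, σ, h1, h2, rfl⟩

/-- A non-degenerate, non-connection face of `ε_j σ` is a face of `σ`. -/
theorem faceOf_of_faceOf_degen (hP : CubicalConnAxioms P) :
    ∀ (m : ℕ) {k : ℕ} (x : P.K k) (σ : P.K m) (j : ℕ), 1 ≤ j → j ≤ m + 1 →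
      FaceOf P x (P.degen m j σ) → ¬ P.Degenerate x → ¬ P.IsConn x → FaceOf P x σ := by
  intro m
  induction m using Nat.strong_induction_on with
  | _ m IH =>
    intro k x σ j hj1 hj2 h hxd hxc
    cases h with
    | refl => exact absurd (degen_degenerate hP j σ hj1 hj2) hxd
    | step α i hi1 hi2 h =>
      rcases lt_trichotomy i j with hlt | rfl | hgt
      · obtain ⟨m', rfl⟩ : ∃ m', m = m' + 1 := ⟨m - 1, by omega⟩
        rw [hP.face_degen_lt α m' i j σ hi1 hlt hj2] at h
        have := IH m' (by omega) x (P.face α m' i σ) (j - 1) (by omega) (by omega) h hxd hxc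
        exact FaceOf.step α i hi1 (by omega) this
      · rw [hP.face_degen_eq α m i σ hi1 (by omega)] at h
        exact h
      · obtain ⟨m', rfl⟩ : ∃ m', m = m' + 1 := ⟨m - 1, by omega⟩
        rw [hP.face_degen_gt α m' i j σ hj1 hgt hi2] at h
        have := IH m' (by omega) x (P.face α m' (i - 1) σ) j hj1 (by omega) h hxd hxc
        exact FaceOf.step α (i - 1) (by omega) (by omega) this

/-- A non-degenerate, non-connection face of `Γ_j σ` is a face of `σ`. -/
theorem faceOf_of_faceOf_conn (hP : CubicalConnAxioms P) :
    ∀ (m : ℕ) {k : ℕ} (x : P.K k) (σ : P.K m) (β : Bool) (j : ℕ), 1 ≤ j → j ≤ m →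
      FaceOf P x (P.conn β m j σ) → ¬ P.Degenerate x → ¬ P.IsConn x → FaceOf P x σ := by
  intro m
  induction m using Nat.strong_induction_on with
  | _ m IH =>
    intro k x σ β j hj1 hj2 h hxd hxc
    cases h with
    | refl => exact absurd (conn_isConn β j σ hj1 hj2) hxc
    | step α i hi1 hi2 h =>
      by_cases hij : i = j ∨ i = j + 1
      · by_cases hab : α = β
        · subst hab
          rw [hP.face_conn_self α m i j σ hj1 hj2 hij] at h
          exact h
        · obtain ⟨m', rfl⟩ : ∃ m', m = m' + 1 := ⟨m - 1, by omega⟩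
          rw [hP.face_conn_opp α β m' i j σ hj1 (by omega) hij hab] at h
          have := faceOf_of_faceOf_degen hP m' x (P.face α m' j σ) j hj1 (by omega) h hxd hxc
          exact FaceOf.step α j hj1 (by omega) this
      · rcases lt_trichotomy i j with hlt | heq | hgt
        · obtain ⟨m', rfl⟩ : ∃ m', m = m' + 1 := ⟨m - 1, by omega⟩
          rw [hP.face_conn_lt α β m' i j σ hi1 hlt (by omega)] at h
          have := IH m' (by omega) x (P.face α m' i σ) β (j - 1) (by omega) (by omega) h hxd hxc
          exact FaceOf.step α i hi1 (by omega) this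
        · exact absurd (Or.inl heq) hij
        · have hgt' : j + 1 < i := by omega
          obtain ⟨m', rfl⟩ : ∃ m', m = m' + 1 := ⟨m - 1, by omega⟩
          rw [hP.face_conn_gt α β m' i j σ hj1 hgt' hi2] at h
          have := IH m' (by omega) x (P.face α m' (i - 1) σ) β j hj1 (by omega) h hxd hxc
          exact FaceOf.step α (i - 1) (by omega) (by omega) this

/-- Every cube factors through a non-degenerate non-connection face via
degeneracy and connection maps. -/
theorem exists_factorization (hP : CubicalConnAxioms P) :
    ∀ (n : ℕ) (σ : P.K n), ∃ (k : ℕ) (ρ : P.K k),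
      DCImage P σ ρ ∧ FaceOf P ρ σ ∧ ¬ P.Degenerate ρ ∧ ¬ P.IsConn ρ := by
  intro n
  induction n using Nat.strong_induction_on with
  | _ n IH =>
    intro σ
    match n, σ with
    | 0, σ => exact ⟨0, σ, DCImage.refl σ, FaceOf.refl σ, fun h => h, fun h => h⟩
    | m + 1, σ =>
      by_cases hd : P.Degenerate σ
      · obtain ⟨i, hi1, hi2, heq⟩ := hd
        obtain ⟨k, ρ, hdc, hf, h1, h2⟩ := IH m (by omega) (P.face true m i σ)
        refine ⟨k, ρ, ?_, ?_, h1, h2⟩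
        · rw [heq]; exact DCImage.degen i hi1 hi2 hdc
        · exact hf.trans' (FaceOf.step true i hi1 hi2 (FaceOf.refl _))
      · by_cases hc : P.IsConn σ
        · obtain ⟨β, i, τ', hi1, hi2, heq⟩ := hc
          obtain ⟨k, ρ, hdc, hf, h1, h2⟩ := IH m (by omega) τ'
          refine ⟨k, ρ, ?_, ?_, h1, h2⟩
          · rw [heq]; exact DCImage.conn β i hi1 hi2 hdc
          · refine hf.trans' (FaceOf.step β i hi1 (by omega) ?_)
            rw [heq, hP.face_conn_self β m i i τ' hi1 hi2 (Or.inl rfl)]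
            exact FaceOf.refl _
        · exact ⟨m + 1, σ, DCImage.refl σ, FaceOf.refl σ, hd, hc⟩

/-- A `DCImage` is either a pure `ConnImage` or degenerate. -/
theorem connImage_or_degenerate (hP : CubicalConnAxioms P) :
    ∀ {m k : ℕ} {x : P.K m} {ρ : P.K k}, DCImage P x ρ →
      ConnImage P x ρ ∨ P.Degenerate x := by
  intro m k x ρ h
  induction h with
  | refl σ => exact Or.inl (ConnImage.refl σ)
  | degen i h1 h2 h ih => exact Or.inr (degen_degenerate hP i _ h1 h2)
  | @conn m k σ ρ β i h1 h2 h ih =>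
    rcases ih with hci | hdeg
    · exact Or.inl (ConnImage.conn β i h1 h2 hci)
    · obtain ⟨m', rfl⟩ : ∃ m', m = m' + 1 := ⟨m - 1, by omega⟩
      obtain ⟨j, hj1, hj2, heq⟩ := hdeg
      right
      rw [heq]
      rcases lt_trichotomy i j with hlt | rfl | hgt
      · rw [hP.conn_degen_lt β m' i j _ h1 hlt hj2]
        exact degen_degenerate hP (j + 1) _ (by omega) (by omega)
      · rw [hP.conn_degen_eq β m' i _ h1 (by omega)]
        exact degen_degenerate hP (i + 1) _ (by omega) (by omega)
      · rw [hP.conn_degen_gt β m' i j _ hj1 hgt h2]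
        exact degen_degenerate hP j _ hj1 (by omega)

/-- A non-degenerate non-connection face descends through a `DCImage` chain. -/
theorem faceOf_base_of_dcImage (hP : CubicalConnAxioms P) :
    ∀ {m kk : ℕ} {t : P.K m} {ρ₀ : P.K kk}, DCImage P t ρ₀ →
      ∀ {k : ℕ} {r : P.K k}, FaceOf P r t → ¬ P.Degenerate r → ¬ P.IsConn r →
      FaceOf P r ρ₀ := by
  intro m kk t ρ₀ h
  induction h with
  | refl σ => exact fun hf _ _ => hf
  | degen i h1 h2 h ih =>
    intro k r hf hrd hrc
    exact ih (faceOf_of_faceOf_degen hP _ r _ i h1 h2 hf hrd hrc) hrd hrc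
  | conn β i h1 h2 h ih =>
    intro k r hf hrd hrc
    exact ih (faceOf_of_faceOf_conn hP _ r _ β i h1 h2 hf hrd hrc) hrd hrc

end Aux

/-- Lemma A.3: if `τ` is non-degenerate and `ρ` is its unique maximal face that is
neither degenerate nor a connection, then `τ` is obtained from `ρ` by applying
connection maps only. -/
theorem nondegenerate_is_connImage_of_maximal_face
    (P : PrecubicalConn) (hP : CubicalConnAxioms P) (n k : ℕ) (τ : P.K n) (ρ : P.K k)
    (hτ : ¬ P.Degenerate τ)
    (hface : FaceOf P ρ τ) (hρd : ¬ P.Degenerate ρ) (hρc : ¬ P.IsConn ρ)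
    (hmax : ∀ (k' : ℕ) (ρ' : P.K k'), FaceOf P ρ' τ → ¬ P.Degenerate ρ' → ¬ P.IsConn ρ' →
      FaceOf P ρ' ρ) :
    ConnImage P τ ρ := by
  obtain ⟨k', ρ₀, hdc, hfρ₀, hρ₀d, hρ₀c⟩ := exists_factorization hP n τ
  have h1 : FaceOf P ρ₀ ρ := hmax k' ρ₀ hfρ₀ hρ₀d hρ₀c
  have h2 : FaceOf P ρ ρ₀ := faceOf_base_of_dcImage hP hdc hface hρd hρc
  have hk : k' = k := le_antisymm h1.dim_le h2.dim_le
  subst hk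
  have : ρ₀ = ρ := eq_of_heq (h1.heq_of_dim_eq rfl)
  subst this
  rcases connImage_or_degenerate hP hdc with h | h
  · exact h
  · exact absurd h hτ
end
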